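/- Suppose S=(s_i) is an orientable sequence of order n and period m such that the (n-4)-tuple 1^{n-4} occurs exactly once in a period of S (and hence S contains no run of 1s of length exceeding n-4). Then E(S) is an orientable sequence of order n of odd weight, whose period is m if w(S) is odd and m+1 if w(S) is even. -/

import Mathlib

/-- A sequence has `m` as a (not necessarily least) period. -/
def hasPer (s : ℕ → Bool) (m : ℕ) : Prop := ∀ i, s (i + m) = s i

/-- `m` is the (least positive) period of `s`. -/
def isPeriod (s : ℕ → Bool) (m : ℕ) : Prop :=
  0 < m ∧ hasPer s m ∧ ∀ k, 0 < k → hasPer s k → m ≤ k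

/-- The `n`-tuple appearing at position `i` of `s`. -/
def tup (s : ℕ → Bool) (n i : ℕ) : Fin n → Bool := fun k => s (i + (k : ℕ))

/-- The reverse of an `n`-tuple. -/
def tupRev {n : ℕ} (u : Fin n → Bool) : Fin n → Bool := fun k => u k.rev

/-- An `n`-window sequence of period `m`. -/
def isNWindow (s : ℕ → Bool) (n m : ℕ) : Prop :=
  isPeriod s m ∧ ∀ i j, tup s n i = tup s n j → i ≡ j [MOD m]

/-- The weight of (one period of) `s`. -/
def wt (s : ℕ → Bool) (m : ℕ) : ℕ := ∑ i ∈ Finset.range m, (if s i then 1 else 0)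

/-- The complement of a sequence. -/
def seqCompl (s : ℕ → Bool) : ℕ → Bool := fun i => !(s i)

/-- Two sequences are disjoint if they share no `n`-tuple. -/
def disjointSeq (s t : ℕ → Bool) (n : ℕ) : Prop := ∀ i j, tup s n i ≠ tup t n j

/-- A sequence is primitive if it is disjoint from its complement. -/
def primitiveSeq (s : ℕ → Bool) (n : ℕ) : Prop := disjointSeq s (seqCompl s) n

/-- An orientable sequence of order `n` and period `m`. -/
def isOrientable (s : ℕ → Bool) (n m : ℕ) : Prop :=
  isNWindow s n m ∧ ∀ i j, tup s n i ≠ tupRev (tup s n j)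

/-- Two sequences are o-disjoint: disjoint, and no `n`-tuple of one is the
reverse of an `n`-tuple of the other. -/
def oDisjoint (s t : ℕ → Bool) (n : ℕ) : Prop :=
  disjointSeq s t n ∧ ∀ i j, tup s n i ≠ tupRev (tup t n j)

/-- The Lempel homomorphism `D` on periodic sequences. -/
def Dmap (t : ℕ → Bool) : ℕ → Bool := fun i => xor (t i) (t (i + 1))

/-- The set `D⁻¹(s)` of sequences mapping to `s` under `D`. -/
def Dinv (s : ℕ → Bool) : Set (ℕ → Bool) := { t | Dmap t = s }

/-- `1^len` occurs at position `i` of `s`. -/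
def occOnes (s : ℕ → Bool) (len i : ℕ) : Prop := ∀ k, k < len → s (i + k) = true

/-- `0^len` occurs at position `i` of `s`. -/
def occZeros (s : ℕ → Bool) (len i : ℕ) : Prop := ∀ k, k < len → s (i + k) = false

/-- The periodic sequence of period dividing `m + 1` obtained from the generating cycle
`[s_0, ..., s_{r-1}, 1, s_r, ..., s_{m-1}]`, i.e. by inserting an extra `1` at
position `r` of the generating cycle `[s_0, ..., s_{m-1}]`. -/
def insertAt (s : ℕ → Bool) (m r : ℕ) : ℕ → Bool := fun i =>
  if i % (m + 1) < r then s (i % (m + 1))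
  else if i % (m + 1) = r then true
  else s (i % (m + 1) - 1)

/-- Lemma 2: if `S` is an orientable sequence of order `n` and period `m` in
which the tuple `1^(n-4)` occurs exactly once in a period (at position `r`),
then `E(S)` — which is `S` if `w(S)` is odd, and otherwise is obtained by
replacing the occurrence of `1^(n-4)` by `1^(n-3)` — is an orientable sequence
of order `n` and odd weight, of period `m` if `w(S)` is odd and `m+1` if `w(S)`
is even. -/

lemma tupRev_tupRev {n : ℕ} (u : Fin n → Bool) : tupRev (tupRev u) = u := by
  funext k; simp [tupRev, Fin.rev_rev]

lemma per_mod {s : ℕ → Bool} {m : ℕ} (hm : 0 < m) (hp : hasPer s m) : ∀ x, s x = s (x % m) := by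
  intro x
  induction x using Nat.strong_induction_on with
  | _ x ih =>
    rcases lt_or_ge x m with h | h
    · rw [Nat.mod_eq_of_lt h]
    · have h2 := hp (x - m)
      have h1 : x - m + m = x := by omega
      rw [h1] at h2
      rw [h2, ih (x - m) (by omega), ← Nat.mod_eq_sub_mod h]

def uSeq (s' : ℕ → Bool) (m : ℕ) : ℕ → Bool := fun k =>
  if k % (m + 1) = 0 then true else s' (k % (m + 1) - 1)

theorem uMain (n m : ℕ) (s' : ℕ → Bool)
    (hn : 6 ≤ n) (hm : n ≤ m)
    (hper : hasPer s' m)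
    (hwin : ∀ i j, tup s' n i = tup s' n j → i ≡ j [MOD m])
    (hor : ∀ i j, tup s' n i ≠ tupRev (tup s' n j))
    (hrun : ∀ k, k < n - 4 → s' k = true)
    (hz1 : s' (n - 4) = false)
    (hz2 : s' (m - 1) = false)
    (hno : ∀ i, ¬ occOnes s' (n - 3) i) :
    (∀ i j, tup (uSeq s' m) n i = tup (uSeq s' m) n j → i ≡ j [MOD (m + 1)]) ∧
      (∀ i j, tup (uSeq s' m) n i ≠ tupRev (tup (uSeq s' m) n j)) := by
  have hm0 : 0 < m := by omega
  have ucong : ∀ p q, p % (m + 1) = q % (m + 1) → uSeq s' m p = uSeq s' m q := by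
    intro p q hpq; simp only [uSeq, hpq]
  have uvallt : ∀ q, q < m + 1 → uSeq s' m q = if q = 0 then true else s' (q - 1) := by
    intro q hq; simp only [uSeq, Nat.mod_eq_of_lt hq]
  have mod2 : ∀ p, m + 1 ≤ p → p < 2 * (m + 1) → p % (m + 1) = p - (m + 1) := by
    intro p h1 h2; rw [Nat.mod_eq_sub_mod h1, Nat.mod_eq_of_lt (by omega)]
  have tcong : ∀ x y, x % (m + 1) = y % (m + 1) →
      tup (uSeq s' m) n x = tup (uSeq s' m) n y := by
    intro x y hxy; funext k
    exact ucong _ _ (Nat.ModEq.add_right _ hxy)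
  -- windows not containing the full run
  have caseA : ∀ x, 1 ≤ x → x ≤ m - 3 → tup (uSeq s' m) n x = tup s' n (x - 1) := by
    intro x h1 h2
    funext k
    have hk : (k : ℕ) < n := k.isLt
    show uSeq s' m (x + (k : ℕ)) = s' (x - 1 + (k : ℕ))
    rcases (by omega : x + (k : ℕ) ≤ m ∨ x + (k : ℕ) = m + 1 ∨ m + 2 ≤ x + (k : ℕ)) with hc | hc | hc
    · rw [uvallt _ (by omega), if_neg (by omega)]
      congr 1
      omega
    · have e1 : uSeq s' m (x + (k : ℕ)) = uSeq s' m 0 :=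
        ucong _ _ (by rw [hc, Nat.mod_self, Nat.zero_mod])
      rw [e1, uvallt 0 (by omega), if_pos rfl, show x - 1 + (k : ℕ) = 0 + m by omega, hper]
      exact (hrun 0 (by omega)).symm
    · have hub : x + (k : ℕ) ≤ m + n - 4 := by omega
      have e1 : uSeq s' m (x + (k : ℕ)) = uSeq s' m (x + (k : ℕ) - (m + 1)) :=
        ucong _ _ (by rw [mod2 _ (by omega) (by omega), Nat.mod_eq_of_lt (by omega)])
      rw [e1, uvallt _ (by omega), if_neg (by omega),
        show x - 1 + (k : ℕ) = (x + (k : ℕ) - (m + 1)) + m by omega, hper,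
        hrun (x + (k : ℕ) - (m + 1) - 1) (by omega), hrun (x + (k : ℕ) - (m + 1)) (by omega)]
  -- the four special windows
  have Wrun : ∀ d k, d ≤ 3 → d ≤ k → k ≤ d + n - 4 → uSeq s' m (m + 1 - d + k) = true := by
    intro d k hd h1 h2
    have e1 : uSeq s' m (m + 1 - d + k) = uSeq s' m (k - d) :=
      ucong _ _ (by rw [mod2 _ (by omega) (by omega), Nat.mod_eq_of_lt (by omega)]; omega)
    rw [e1, uvallt _ (by omega)]
    split_ifs with h0
    · rfl
    · exact hrun _ (by omega)
  have Wleft : ∀ d, 1 ≤ d → d ≤ 3 → uSeq s' m (m + 1 - d + (d - 1)) = false := by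
    intro d h1 h2
    rw [show m + 1 - d + (d - 1) = m by omega, uvallt m (by omega), if_neg (by omega)]
    exact hz2
  have Wright : ∀ d, d ≤ 2 → uSeq s' m (m + 1 - d + (d + n - 3)) = false := by
    intro d hd
    have e1 : uSeq s' m (m + 1 - d + (d + n - 3)) = uSeq s' m (n - 3) :=
      ucong _ _ (by rw [mod2 _ (by omega) (by omega), Nat.mod_eq_of_lt (by omega)]; omega)
    rw [e1, uvallt _ (by omega), if_neg (by omega), show n - 3 - 1 = n - 4 by omega]
    exact hz1
  have tval : ∀ p q, q < m + 1 → q ≠ 0 → p % (m + 1) = q → uSeq s' m p = s' (q - 1) := by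
    intro p q h1 h2 h3
    rw [ucong p q (by rw [h3, Nat.mod_eq_of_lt h1]), uvallt _ h1, if_neg h2]
  have t00 : uSeq s' m (m + 1 - 0 + (n - 2)) = s' (n - 3) := by
    rw [tval _ (n - 2) (by omega) (by omega) (by rw [mod2 _ (by omega) (by omega)]; omega)]
    congr 1
  have t01 : uSeq s' m (m + 1 - 0 + (n - 1)) = s' (n - 2) := by
    rw [tval _ (n - 1) (by omega) (by omega) (by rw [mod2 _ (by omega) (by omega)]; omega)]
    congr 1
  have t30 : uSeq s' m (m + 1 - 3 + 0) = s' (m - 3) := by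
    rw [tval _ (m - 2) (by omega) (by omega) (by rw [Nat.mod_eq_of_lt (by omega)]; omega)]
    congr 1
  have t31 : uSeq s' m (m + 1 - 3 + 1) = s' (m - 2) := by
    rw [tval _ (m - 1) (by omega) (by omega) (by rw [Nat.mod_eq_of_lt (by omega)]; omega)]
    congr 1
  have t1 : uSeq s' m (m + 1 - 1 + (n - 1)) = s' (n - 3) := by
    rw [tval _ (n - 2) (by omega) (by omega) (by rw [mod2 _ (by omega) (by omega)]; omega)]
    congr 1
  have t2 : uSeq s' m (m + 1 - 2 + 0) = s' (m - 2) := by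
    rw [tval _ (m - 1) (by omega) (by omega) (by rw [Nat.mod_eq_of_lt (by omega)]; omega)]
    congr 1
  -- classification of window positions
  have classify : ∀ x, x < m + 1 →
      (1 ≤ x ∧ x ≤ m - 3 ∧ tup (uSeq s' m) n x = tup s' n (x - 1)) ∨
      ∃ d, d ≤ 3 ∧ x = (m + 1 - d) % (m + 1) ∧
        tup (uSeq s' m) n x = tup (uSeq s' m) n (m + 1 - d) := by
    intro x hx
    rcases (by omega : (1 ≤ x ∧ x ≤ m - 3) ∨ x = 0 ∨ x = m ∨ x = m - 1 ∨ x = m - 2)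
      with h | h | h | h | h
    · exact Or.inl ⟨h.1, h.2, caseA x h.1 h.2⟩
    · refine Or.inr ⟨0, by omega, ?_, tcong _ _ ?_⟩
      · rw [Nat.sub_zero, Nat.mod_self]; exact h
      · rw [h, Nat.zero_mod, Nat.sub_zero, Nat.mod_self]
    · refine Or.inr ⟨1, by omega, ?_, tcong _ _ ?_⟩
      · rw [show m + 1 - 1 = m by omega, Nat.mod_eq_of_lt (by omega)]; exact h
      · rw [h, show m + 1 - 1 = m by omega]
    · refine Or.inr ⟨2, by omega, ?_, tcong _ _ ?_⟩
      · rw [show m + 1 - 2 = m - 1 by omega, Nat.mod_eq_of_lt (by omega)]; exact h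
      · rw [h, show m + 1 - 2 = m - 1 by omega]
    · refine Or.inr ⟨3, by omega, ?_, tcong _ _ ?_⟩
      · rw [show m + 1 - 3 = m - 2 by omega, Nat.mod_eq_of_lt (by omega)]; exact h
      · rw [h, show m + 1 - 3 = m - 2 by omega]
  -- an s'-window can never coincide with a special window (they contain 1^{n-3})
  have runContra : ∀ y d, d ≤ 3 → tup s' n y = tup (uSeq s' m) n (m + 1 - d) → False := by
    intro y d hd hEq
    apply hno (y + d)
    intro k hk
    have hc : s' (y + (d + k)) = uSeq s' m (m + 1 - d + (d + k)) :=
      congrFun hEq ⟨d + k, by omega⟩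
    rw [show y + d + k = y + (d + k) by omega, hc]
    exact Wrun d (d + k) hd (by omega) (by omega)
  have revRunContra : ∀ y d, d ≤ 3 →
      tup s' n y = tupRev (tup (uSeq s' m) n (m + 1 - d)) → False := by
    intro y d hd hEq
    apply hno (y + (3 - d))
    intro k hk
    have hc : s' (y + (3 - d + k)) = uSeq s' m (m + 1 - d + (n - (3 - d + k + 1))) :=
      congrFun hEq ⟨3 - d + k, by omega⟩
    rw [show y + (3 - d) + k = y + (3 - d + k) by omega, hc]
    exact Wrun d (n - (3 - d + k + 1)) hd (by omega) (by omega)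
  have specCore : ∀ d e, d < e → e ≤ 3 →
      tup (uSeq s' m) n (m + 1 - d) = tup (uSeq s' m) n (m + 1 - e) → False := by
    intro d e hde he hEq
    have hc : uSeq s' m (m + 1 - d + (e - 1)) = uSeq s' m (m + 1 - e + (e - 1)) :=
      congrFun hEq ⟨e - 1, by omega⟩
    rw [Wrun d (e - 1) (by omega) (by omega) (by omega), Wleft e (by omega) (by omega)] at hc
    simp at hc
  have case12 : tup (uSeq s' m) n (m + 1 - 1) = tupRev (tup (uSeq s' m) n (m + 1 - 2)) → False := by
    intro hEq
    have hc : uSeq s' m (m + 1 - 1 + (n - 1)) = uSeq s' m (m + 1 - 2 + (n - (n - 1 + 1))) :=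
      congrFun hEq ⟨n - 1, by omega⟩
    rw [show n - (n - 1 + 1) = 0 by omega, t1, t2] at hc
    -- hc : s' (n - 3) = s' (m - 2)
    have val : ∀ j, j < n → s' (m - 2 + j) =
        if j = 0 ∨ j = n - 1 then s' (m - 2) else if j = 1 ∨ j = n - 2 then false else true := by
      intro j hj
      rcases (by omega : j = 0 ∨ j = 1 ∨ (2 ≤ j ∧ j ≤ n - 3) ∨ j = n - 2 ∨ j = n - 1)
        with h | h | h | h | h
      · subst h; rw [if_pos (Or.inl rfl), Nat.add_zero]
      · subst h
        rw [if_neg (by omega), if_pos (Or.inl rfl), show m - 2 + 1 = m - 1 by omega]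
        exact hz2
      · rw [if_neg (by omega), if_neg (by omega), show m - 2 + j = (j - 2) + m by omega, hper]
        exact hrun _ (by omega)
      · subst h
        rw [if_neg (by omega), if_pos (Or.inr rfl),
          show m - 2 + (n - 2) = (n - 4) + m by omega, hper]
        exact hz1
      · subst h
        rw [if_pos (Or.inr rfl), show m - 2 + (n - 1) = (n - 3) + m by omega, hper]
        exact hc
    apply hor (m - 2) (m - 2)
    funext k
    have hk : (k : ℕ) < n := k.isLt
    show s' (m - 2 + (k : ℕ)) = s' (m - 2 + (n - ((k : ℕ) + 1)))
    rw [val _ hk, val _ (by omega)]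
    split_ifs <;> first | rfl | omega
  have case03 : tup (uSeq s' m) n (m + 1 - 0) = tupRev (tup (uSeq s' m) n (m + 1 - 3)) → False := by
    intro hEq
    have hc1 : uSeq s' m (m + 1 - 0 + (n - 2)) = uSeq s' m (m + 1 - 3 + (n - (n - 2 + 1))) :=
      congrFun hEq ⟨n - 2, by omega⟩
    rw [show n - (n - 2 + 1) = 1 by omega, t00, t31] at hc1
    have hc2 : uSeq s' m (m + 1 - 0 + (n - 1)) = uSeq s' m (m + 1 - 3 + (n - (n - 1 + 1))) :=
      congrFun hEq ⟨n - 1, by omega⟩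
    rw [show n - (n - 1 + 1) = 0 by omega, t01, t30] at hc2
    -- hc1 : s' (n - 3) = s' (m - 2), hc2 : s' (n - 2) = s' (m - 3)
    have valL : ∀ j, j < n → s' (m - 1 + j) =
        if j = 0 ∨ j = n - 3 then false
        else if j = n - 2 then s' (m - 2)
        else if j = n - 1 then s' (m - 3) else true := by
      intro j hj
      rcases (by omega : j = 0 ∨ (1 ≤ j ∧ j ≤ n - 4) ∨ j = n - 3 ∨ j = n - 2 ∨ j = n - 1)
        with h | h | h | h | h
      · subst h; rw [if_pos (Or.inl rfl), Nat.add_zero]; exact hz2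
      · rw [if_neg (by omega), if_neg (by omega), if_neg (by omega),
          show m - 1 + j = (j - 1) + m by omega, hper]
        exact hrun _ (by omega)
      · subst h
        rw [if_pos (Or.inr rfl), show m - 1 + (n - 3) = (n - 4) + m by omega, hper]
        exact hz1
      · subst h
        rw [if_neg (by omega), if_pos rfl, show m - 1 + (n - 2) = (n - 3) + m by omega, hper]
        exact hc1
      · subst h
        rw [if_neg (by omega), if_neg (by omega), if_pos rfl,
          show m - 1 + (n - 1) = (n - 2) + m by omega, hper]
        exact hc2
    have valR : ∀ j, j < n → s' (m - 3 + j) =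
        if j = 2 ∨ j = n - 1 then false
        else if j = 0 then s' (m - 3)
        else if j = 1 then s' (m - 2) else true := by
      intro j hj
      rcases (by omega : j = 0 ∨ j = 1 ∨ j = 2 ∨ (3 ≤ j ∧ j ≤ n - 2) ∨ j = n - 1)
        with h | h | h | h | h
      · subst h; rw [if_neg (by omega), if_pos rfl, Nat.add_zero]
      · subst h
        rw [if_neg (by omega), if_neg (by omega), if_pos rfl, show m - 3 + 1 = m - 2 by omega]
      · subst h; rw [if_pos (Or.inl rfl), show m - 3 + 2 = m - 1 by omega]; exact hz2
      · rw [if_neg (by omega), if_neg (by omega), if_neg (by omega),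
          show m - 3 + j = (j - 3) + m by omega, hper]
        exact hrun _ (by omega)
      · subst h
        rw [if_pos (Or.inr rfl), show m - 3 + (n - 1) = (n - 4) + m by omega, hper]
        exact hz1
    apply hor (m - 1) (m - 3)
    funext k
    have hk : (k : ℕ) < n := k.isLt
    show s' (m - 1 + (k : ℕ)) = s' (m - 3 + (n - ((k : ℕ) + 1)))
    rw [valL _ hk, valR _ (by omega)]
    split_ifs <;> first | rfl | omega
  have specRev : ∀ d e, d ≤ 3 → e ≤ 3 →
      tup (uSeq s' m) n (m + 1 - d) = tupRev (tup (uSeq s' m) n (m + 1 - e)) → False := by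
    intro d e hd he hEq
    rcases (by omega : d + e ≤ 2 ∨ 4 ≤ d + e ∨ (d = 0 ∧ e = 3) ∨ (d = 1 ∧ e = 2) ∨
      (d = 2 ∧ e = 1) ∨ (d = 3 ∧ e = 0)) with hc | hc | ⟨h1, h2⟩ | ⟨h1, h2⟩ | ⟨h1, h2⟩ | ⟨h1, h2⟩
    · have hcc : uSeq s' m (m + 1 - d + (2 - e)) = uSeq s' m (m + 1 - e + (n - (2 - e + 1))) :=
        congrFun hEq ⟨2 - e, by omega⟩
      rw [show n - (2 - e + 1) = e + n - 3 by omega] at hcc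
      rw [Wrun d (2 - e) (by omega) (by omega) (by omega), Wright e (by omega)] at hcc
      simp at hcc
    · have hcc : uSeq s' m (m + 1 - d + (d - 1)) = uSeq s' m (m + 1 - e + (n - (d - 1 + 1))) :=
        congrFun hEq ⟨d - 1, by omega⟩
      rw [show n - (d - 1 + 1) = n - d by omega] at hcc
      rw [Wleft d (by omega) (by omega), Wrun e (n - d) (by omega) (by omega) (by omega)] at hcc
      simp at hcc
    · subst h1; subst h2; exact case03 hEq
    · subst h1; subst h2; exact case12 hEq
    · subst h1; subst h2
      apply case12
      have h5 := congrArg tupRev hEq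
      rw [tupRev_tupRev] at h5
      exact h5.symm
    · subst h1; subst h2
      apply case03
      have h5 := congrArg tupRev hEq
      rw [tupRev_tupRev] at h5
      exact h5.symm
  constructor
  · intro i j hEq
    have ei := tcong i (i % (m + 1)) (Nat.mod_mod_of_dvd i dvd_rfl).symm
    have ej := tcong j (j % (m + 1)) (Nat.mod_mod_of_dvd j dvd_rfl).symm
    show i % (m + 1) = j % (m + 1)
    have hiM : i % (m + 1) < m + 1 := Nat.mod_lt _ (by omega)
    have hjM : j % (m + 1) < m + 1 := Nat.mod_lt _ (by omega)
    obtain ⟨i', hi'⟩ : ∃ a, i % (m + 1) = a := ⟨_, rfl⟩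
    obtain ⟨j', hj'⟩ : ∃ a, j % (m + 1) = a := ⟨_, rfl⟩
    rw [hi'] at ei hiM ⊢
    rw [hj'] at ej hjM ⊢
    have hEq' : tup (uSeq s' m) n i' = tup (uSeq s' m) n j' := ei.symm.trans (hEq.trans ej)
    rcases classify i' hiM with ⟨hi1, hi2, hi3⟩ | ⟨d, hd, hd2, hd3⟩ <;>
      rcases classify j' hjM with ⟨hj1, hj2, hj3⟩ | ⟨e, he, he2, he3⟩
    · have hw := hwin _ _ (show tup s' n (i' - 1) = tup s' n (j' - 1) by
        rw [← hi3, ← hj3]; exact hEq')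
      have h4 : (i' - 1) % m = (j' - 1) % m := hw
      rw [Nat.mod_eq_of_lt (by omega), Nat.mod_eq_of_lt (by omega)] at h4
      omega
    · exact (runContra (i' - 1) e he (by rw [← hi3, hEq', he3])).elim
    · exact (runContra (j' - 1) d hd (by rw [← hj3, ← hEq', hd3])).elim
    · rcases Nat.lt_trichotomy d e with hlt | heq | hlt
      · exact (specCore d e hlt he (by rw [← hd3, hEq', he3])).elim
      · rw [hd2, he2, heq]
      · exact (specCore e d hlt hd (by rw [← he3, ← hEq', hd3])).elim
  · intro i j hEq
    have ei := tcong i (i % (m + 1)) (Nat.mod_mod_of_dvd i dvd_rfl).symm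
    have ej := tcong j (j % (m + 1)) (Nat.mod_mod_of_dvd j dvd_rfl).symm
    have hiM : i % (m + 1) < m + 1 := Nat.mod_lt _ (by omega)
    have hjM : j % (m + 1) < m + 1 := Nat.mod_lt _ (by omega)
    obtain ⟨i', hi'⟩ : ∃ a, i % (m + 1) = a := ⟨_, rfl⟩
    obtain ⟨j', hj'⟩ : ∃ a, j % (m + 1) = a := ⟨_, rfl⟩
    rw [hi'] at ei hiM
    rw [hj'] at ej hjM
    have hEq' : tup (uSeq s' m) n i' = tupRev (tup (uSeq s' m) n j') := by
      rw [← ei, ← ej]; exact hEq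
    rcases classify i' hiM with ⟨hi1, hi2, hi3⟩ | ⟨d, hd, hd2, hd3⟩ <;>
      rcases classify j' hjM with ⟨hj1, hj2, hj3⟩ | ⟨e, he, he2, he3⟩
    · rw [hi3, hj3] at hEq'
      exact hor _ _ hEq'
    · rw [hi3, he3] at hEq'
      exact revRunContra _ e he hEq'
    · rw [hd3, hj3] at hEq'
      have h5 := congrArg tupRev hEq'
      rw [tupRev_tupRev] at h5
      exact revRunContra _ d hd h5.symm
    · rw [hd3, he3] at hEq'
      exact specRev d e hd he hEq'

lemma wt_insert (s : ℕ → Bool) (m r : ℕ) (hr : r < m) :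
    wt (insertAt s m r) (m + 1) = wt s m + 1 := by
  unfold wt
  rw [Finset.range_eq_Ico, Finset.range_eq_Ico,
    ← Finset.sum_Ico_consecutive _ (Nat.zero_le r) (by omega : r ≤ m + 1),
    ← Finset.sum_Ico_consecutive _ (Nat.zero_le r) (le_of_lt hr)]
  have e1 : ∀ i ∈ Finset.Ico 0 r,
      (if insertAt s m r i then (1 : ℕ) else 0) = (if s i then (1 : ℕ) else 0) := by
    intro i hi
    simp only [Finset.mem_Ico] at hi
    have hmod : i % (m + 1) = i := Nat.mod_eq_of_lt (by omega)
    simp only [insertAt, hmod, if_pos hi.2]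
  rw [Finset.sum_congr rfl e1]
  have e2 : (Finset.Ico r (m + 1)).sum (fun i => if insertAt s m r i then (1 : ℕ) else 0)
      = (Finset.Ico r m).sum (fun i => if s i then (1 : ℕ) else 0) + 1 := by
    rw [Finset.sum_Ico_eq_sum_range, Finset.sum_Ico_eq_sum_range,
      show m + 1 - r = (m - r) + 1 by omega, Finset.sum_range_succ']
    congr 1
    · apply Finset.sum_congr rfl
      intro k hk
      simp only [Finset.mem_range] at hk
      have h1 : (r + (k + 1)) % (m + 1) = r + (k + 1) := Nat.mod_eq_of_lt (by omega)
      simp only [insertAt, h1]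
      rw [if_neg (by omega : ¬ (r + (k + 1) < r)), if_neg (by omega : ¬ (r + (k + 1) = r)),
        show r + (k + 1) - 1 = r + k by omega]
    · have h1 : (r + 0) % (m + 1) = r := by rw [Nat.add_zero]; exact Nat.mod_eq_of_lt (by omega)
      simp only [insertAt, h1]
      norm_num
  rw [e2]
  omega


theorem extension_orientable (n m r : ℕ) (s : ℕ → Bool)
    (h : isOrientable s n m) (hr : r < m)
    (hocc : occOnes s (n - 4) r)
    (huniq : ∀ i, i < m → occOnes s (n - 4) i → i = r) :
    isOrientable (if Odd (wt s m) then s else insertAt s m r) n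
        (if Odd (wt s m) then m else m + 1) ∧
      Odd (wt (if Odd (wt s m) then s else insertAt s m r)
        (if Odd (wt s m) then m else m + 1)) := by
  obtain ⟨⟨⟨hm0, hper, hleast⟩, hwin⟩, hor⟩ := h
  rcases Nat.eq_zero_or_pos n with hn0 | hn1
  · subst hn0
    exact ((hor 0 0) (funext fun k => absurd k.isLt (by omega))).elim
  have smod : ∀ x, s x = s (x % m) := per_mod hm0 hper
  have hrk : ∀ x, (r + (x % m + m - r) % m) % m = x % m := by
    intro x
    have e1 : (r + (x % m + m - r) % m) % m = (r + (x % m + m - r)) % m :=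
      Nat.ModEq.add_left r (Nat.mod_modEq _ m)
    rw [e1, show r + (x % m + m - r) = x % m + m by omega, Nat.add_mod_right,
      Nat.mod_mod_of_dvd _ dvd_rfl]
  have hval : ∀ x, s x = s (r + (x % m + m - r) % m) := by
    intro x
    rw [smod (r + (x % m + m - r) % m), hrk x, ← smod x]
  have hm2 : 2 ≤ m := by
    by_contra hc
    have hm1 : m = 1 := by omega
    apply hor 0 0
    funext k
    show s (0 + (k : ℕ)) = s (0 + (n - ((k : ℕ) + 1)))
    rw [smod (0 + (k : ℕ)), smod (0 + (n - ((k : ℕ) + 1))), hm1, Nat.mod_one, Nat.mod_one]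
  have occMod : ∀ i, occOnes s (n - 4) i → occOnes s (n - 4) (i % m) := by
    intro i hi k hk
    have h1 : (i % m + k) % m = (i + k) % m := Nat.ModEq.add_right k (Nat.mod_modEq i m)
    rw [smod (i % m + k), h1, ← smod (i + k)]
    exact hi k hk
  have huniq' : ∀ i, occOnes s (n - 4) i → i % m = r := fun i hi =>
    huniq _ (Nat.mod_lt _ hm0) (occMod i hi)
  have hn5 : 5 ≤ n := by
    by_contra hc
    have h0 := huniq' 0 (fun k hk => absurd hk (by omega))
    have h1 := huniq' 1 (fun k hk => absurd hk (by omega))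
    rw [Nat.zero_mod] at h0
    rw [Nat.mod_eq_of_lt (by omega)] at h1
    omega
  have factA : s (r + (n - 4)) = false := by
    by_contra hc
    rw [Bool.not_eq_false] at hc
    have hocc2 : occOnes s (n - 4) (r + 1) := by
      intro k hk
      rcases (by omega : k + 1 < n - 4 ∨ k + 1 = n - 4) with hcc | hcc
      · rw [show r + 1 + k = r + (k + 1) by omega]
        exact hocc (k + 1) hcc
      · rw [show r + 1 + k = r + (n - 4) by omega]
        exact hc
    have h2 := huniq' _ hocc2
    rcases (by omega : r + 1 < m ∨ r + 1 = m) with hcc | hcc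
    · rw [Nat.mod_eq_of_lt hcc] at h2; omega
    · rw [hcc, Nat.mod_self] at h2; omega
  have factB : s (r + (m - 1)) = false := by
    by_contra hc
    rw [Bool.not_eq_false] at hc
    have hocc2 : occOnes s (n - 4) (r + (m - 1)) := by
      intro k hk
      rcases Nat.eq_zero_or_pos k with h0 | h0
      · subst h0; rw [Nat.add_zero]; exact hc
      · rw [show r + (m - 1) + k = (r + (k - 1)) + m by omega, hper]
        exact hocc (k - 1) (by omega)
    have h2 := huniq' _ hocc2
    rcases Nat.eq_zero_or_pos r with h0 | h0
    · rw [h0] at h2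
      rw [Nat.mod_eq_of_lt (by omega)] at h2
      omega
    · rw [show r + (m - 1) = (r - 1) + m by omega, Nat.add_mod_right,
        Nat.mod_eq_of_lt (by omega)] at h2
      omega
  have hno13 : ∀ i, ¬ occOnes s (n - 3) i := by
    intro i hi
    have h1 := huniq' i (fun k hk => hi k (by omega))
    have h2 := huniq' (i + 1) (fun k hk => by
      rw [show i + 1 + k = i + (k + 1) by omega]; exact hi (k + 1) (by omega))
    have h3 : i % m = (i + 1) % m := by rw [h1, h2]
    have h4 : m ∣ (i + 1) - i := (Nat.modEq_iff_dvd' (by omega)).mp h3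
    have h5 := Nat.le_of_dvd (by omega) h4
    omega
  have hmn3 : n - 3 ≤ m := by
    by_contra hc
    have hall : ∀ x, s x = true := by
      intro x
      rw [hval x]
      exact hocc _ (lt_of_lt_of_le (Nat.mod_lt _ hm0) (by omega))
    apply hor 0 0
    funext k
    show s (0 + (k : ℕ)) = s (0 + (n - ((k : ℕ) + 1)))
    rw [hall, hall]
  have hmn : n ≤ m := by
    by_contra hc
    have key : ∀ x y, (x + y) % m = (2 * r + n - 5) % m → s x = s y := by
      intro x y hxy
      obtain ⟨k, hkm, hxk, hmodk⟩ : ∃ k, k < m ∧ s x = s (r + k) ∧ (r + k) % m = x % m :=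
        ⟨(x % m + m - r) % m, Nat.mod_lt _ hm0, hval x, hrk x⟩
      obtain ⟨l, hlm, hyl, hmodl⟩ : ∃ l, l < m ∧ s y = s (r + l) ∧ (r + l) % m = y % m :=
        ⟨(y % m + m - r) % m, Nat.mod_lt _ hm0, hval y, hrk y⟩
      have e1 : (r + k + (r + l)) % m = (x + y) % m := Nat.ModEq.add hmodk hmodl
      have e2 : (2 * r + (k + l)) % m = (2 * r + (n - 5)) % m := by
        rw [show 2 * r + (k + l) = r + k + (r + l) by omega, e1, hxy,
          show 2 * r + n - 5 = 2 * r + (n - 5) by omega]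
      have hsum : (k + l) % m = (n - 5) % m := Nat.ModEq.add_left_cancel' (2 * r) e2
      have hd : k + l = n - 5 ∨ k + l = n - 5 + m := by
        rcases lt_or_ge (k + l) m with hh | hh
        · left
          rw [Nat.mod_eq_of_lt hh, Nat.mod_eq_of_lt (by omega)] at hsum
          omega
        · right
          rw [Nat.mod_eq_sub_mod hh, Nat.mod_eq_of_lt (by omega),
            Nat.mod_eq_of_lt (by omega)] at hsum
          omega
      rw [hxk, hyl]
      rcases (by omega : (k < n - 4 ∧ l < n - 4) ∨ (k = n - 4 ∧ l = m - 1) ∨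
        (k = m - 1 ∧ l = n - 4) ∨ k = l) with ⟨h1, h2⟩ | ⟨h1, h2⟩ | ⟨h1, h2⟩ | h1
      · rw [hocc _ h1, hocc _ h2]
      · rw [h1, h2, factA, factB]
      · rw [h1, h2, factA, factB]
      · rw [h1]
    obtain ⟨w, hw⟩ : ∃ w, (n - 1) % m = w := ⟨_, rfl⟩
    obtain ⟨q, hq⟩ : ∃ q, (n - 1) / m = q := ⟨_, rfl⟩
    apply hor 0 (2 * r + n - 5 + m - w)
    funext kk
    have hkk : (kk : ℕ) < n := kk.isLt
    show s (0 + (kk : ℕ)) = s (2 * r + n - 5 + m - w + (n - ((kk : ℕ) + 1)))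
    apply key
    have hmlt : w < m := hw ▸ Nat.mod_lt _ hm0
    have hdiv : m * q + w = n - 1 := by rw [← hw, ← hq]; exact Nat.div_add_mod _ _
    have hmul : m * (1 + q) = m + m * q := by ring
    rw [show 0 + (kk : ℕ) + (2 * r + n - 5 + m - w + (n - ((kk : ℕ) + 1)))
        = (2 * r + n - 5) + m * (1 + q) by omega]
    exact Nat.add_mul_mod_self_left _ _ _
  by_cases hodd : Odd (wt s m)
  · simp only [if_pos hodd]
    exact ⟨⟨⟨⟨hm0, hper, hleast⟩, hwin⟩, hor⟩, hodd⟩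
  · simp only [if_neg hodd]
    have hn6 : 6 ≤ n := by
      by_contra hcn
      apply hodd
      have h0 : ∀ b ∈ Finset.range m, b ≠ r → (if s b then (1 : ℕ) else 0) = 0 := by
        intro b hb hbr
        have hsb : s b = false := by
          by_contra hsb
          rw [Bool.not_eq_false] at hsb
          exact hbr (huniq b (Finset.mem_range.mp hb) (fun k hk => by
            rw [show k = 0 by omega, Nat.add_zero]; exact hsb))
        rw [hsb]
        rfl
      have h1 : r ∉ Finset.range m → (if s r then (1 : ℕ) else 0) = 0 :=
        fun hrr => absurd (Finset.mem_range.mpr hr) hrr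
      have hsr : s r = true := by
        have := hocc 0 (by omega)
        rwa [Nat.add_zero] at this
      have hw1 : wt s m = 1 := by
        unfold wt
        rw [Finset.sum_eq_single r h0 h1, hsr]
        rfl
      rw [hw1]
      exact odd_one
    -- transfer facts to the rotated sequence s' = fun x => s (r + x)
    have hper' : hasPer (fun x => s (r + x)) m := by
      intro x
      show s (r + (x + m)) = s (r + x)
      rw [show r + (x + m) = (r + x) + m by omega]
      exact hper (r + x)
    have tupS : ∀ i, tup (fun x => s (r + x)) n i = tup s n (r + i) := by
      intro i
      funext k
      show s (r + (i + (k : ℕ))) = s (r + i + (k : ℕ))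
      rw [Nat.add_assoc]
    have hwin' : ∀ i j, tup (fun x => s (r + x)) n i = tup (fun x => s (r + x)) n j →
        i ≡ j [MOD m] := by
      intro i j hEq
      rw [tupS i, tupS j] at hEq
      exact Nat.ModEq.add_left_cancel' r (hwin _ _ hEq)
    have hor' : ∀ i j, tup (fun x => s (r + x)) n i ≠ tupRev (tup (fun x => s (r + x)) n j) := by
      intro i j hEq
      rw [tupS i, tupS j] at hEq
      exact hor _ _ hEq
    have hrun' : ∀ k, k < n - 4 → (fun x => s (r + x)) k = true := fun k hk => hocc k hk
    have hno' : ∀ i, ¬ occOnes (fun x => s (r + x)) (n - 3) i := by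
      intro i hi
      apply hno13 (r + i)
      intro k hk
      rw [Nat.add_assoc]
      exact hi k hk
    obtain ⟨G1u, G2u⟩ := uMain n m (fun x => s (r + x)) hn6 hmn hper' hwin' hor' hrun'
      factA factB hno'
    have tmodinv : ∀ p q, p % (m + 1) = q % (m + 1) → insertAt s m r p = insertAt s m r q := by
      intro p q hpq
      simp only [insertAt, hpq]
    have tu : ∀ x, insertAt s m r (r + x) = uSeq (fun y => s (r + y)) m x := by
      intro x
      have hx : x % (m + 1) < m + 1 := Nat.mod_lt _ (by omega)
      have e1 : insertAt s m r (r + x) = insertAt s m r (r + x % (m + 1)) :=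
        tmodinv _ _ (Nat.ModEq.add_left r (Nat.mod_modEq x (m + 1))).symm
      have e2 : uSeq (fun y => s (r + y)) m x = uSeq (fun y => s (r + y)) m (x % (m + 1)) := by
        simp only [uSeq, Nat.mod_mod_of_dvd _ dvd_rfl]
      rw [e1, e2]
      rcases (by omega : x % (m + 1) = 0 ∨ (1 ≤ x % (m + 1) ∧ x % (m + 1) ≤ m - r) ∨
        (m - r < x % (m + 1) ∧ x % (m + 1) ≤ m)) with hc | hc | hc
      · rw [hc]
        simp only [insertAt, uSeq, Nat.add_zero, Nat.zero_mod]
        rw [Nat.mod_eq_of_lt (show r < m + 1 by omega)]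
        norm_num
      · have h1 : (r + x % (m + 1)) % (m + 1) = r + x % (m + 1) := Nat.mod_eq_of_lt (by omega)
        simp only [insertAt, uSeq, h1, Nat.mod_eq_of_lt hx]
        rw [if_neg (by omega : ¬ (r + x % (m + 1) < r)),
          if_neg (by omega : ¬ (r + x % (m + 1) = r)),
          if_neg (by omega : ¬ (x % (m + 1) = 0))]
        show s (r + x % (m + 1) - 1) = s (r + (x % (m + 1) - 1))
        congr 1
        omega
      · have h1 : (r + x % (m + 1)) % (m + 1) = r + x % (m + 1) - (m + 1) := by
          rw [Nat.mod_eq_sub_mod (by omega), Nat.mod_eq_of_lt (by omega)]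
        simp only [insertAt, uSeq, h1, Nat.mod_eq_of_lt hx]
        rw [if_pos (by omega : r + x % (m + 1) - (m + 1) < r),
          if_neg (by omega : ¬ (x % (m + 1) = 0))]
        show s (r + x % (m + 1) - (m + 1)) = s (r + (x % (m + 1) - 1))
        rw [show r + (x % (m + 1) - 1) = (r + x % (m + 1) - (m + 1)) + m by omega]
        exact (hper _).symm
    have tupTrans : ∀ j, tup (insertAt s m r) n j
        = tup (uSeq (fun y => s (r + y)) m) n ((j + (m + 1) - r) % (m + 1)) := by
      intro j
      funext k
      show insertAt s m r (j + (k : ℕ))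
          = uSeq (fun y => s (r + y)) m ((j + (m + 1) - r) % (m + 1) + (k : ℕ))
      rw [← tu ((j + (m + 1) - r) % (m + 1) + (k : ℕ))]
      apply tmodinv
      have e1 : (r + ((j + (m + 1) - r) % (m + 1) + (k : ℕ))) % (m + 1)
          = (r + ((j + (m + 1) - r) + (k : ℕ))) % (m + 1) :=
        Nat.ModEq.add_left r (Nat.ModEq.add_right _ (Nat.mod_modEq _ _))
      rw [e1, show r + ((j + (m + 1) - r) + (k : ℕ)) = (j + (k : ℕ)) + (m + 1) by omega]
      exact (Nat.add_mod_right _ _).symm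
    have G1t : ∀ i j, tup (insertAt s m r) n i = tup (insertAt s m r) n j →
        i ≡ j [MOD (m + 1)] := by
      intro i j hEq
      rw [tupTrans i, tupTrans j] at hEq
      have h1 := G1u _ _ hEq
      have a1 : (i + (m + 1) - r) % (m + 1) ≡ i + ((m + 1) - r) [MOD (m + 1)] := by
        rw [show i + (m + 1) - r = i + ((m + 1) - r) by omega]
        exact Nat.mod_modEq _ _
      have a2 : (j + (m + 1) - r) % (m + 1) ≡ j + ((m + 1) - r) [MOD (m + 1)] := by
        rw [show j + (m + 1) - r = j + ((m + 1) - r) by omega]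
        exact Nat.mod_modEq _ _
      exact Nat.ModEq.add_right_cancel' _ (a1.symm.trans (h1.trans a2))
    have G2t : ∀ i j, tup (insertAt s m r) n i ≠ tupRev (tup (insertAt s m r) n j) := by
      intro i j hEq
      rw [tupTrans i, tupTrans j] at hEq
      exact G2u _ _ hEq
    have hasP : hasPer (insertAt s m r) (m + 1) := by
      intro i
      exact tmodinv _ _ (Nat.add_mod_right i (m + 1))
    refine ⟨⟨⟨⟨by omega, hasP, ?_⟩, G1t⟩, G2t⟩, ?_⟩
    · intro k hk hkper
      have hEq : tup (insertAt s m r) n k = tup (insertAt s m r) n 0 := by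
        funext j
        show insertAt s m r (k + (j : ℕ)) = insertAt s m r (0 + (j : ℕ))
        rw [show k + (j : ℕ) = (0 + (j : ℕ)) + k by omega]
        exact hkper _
      have h1 : k % (m + 1) = 0 % (m + 1) := G1t _ _ hEq
      rw [Nat.zero_mod] at h1
      have := Nat.le_of_dvd hk (Nat.dvd_of_mod_eq_zero h1)
      omega
    · rw [wt_insert s m r hr]
      exact Even.add_one (Nat.not_odd_iff_even.mp hodd)
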